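/- Let A be an n×n symmetric real matrix, Q the Householder reflector with v = (1,...,1,1+√n)^T, V = I - (1/n)J the centering matrix, and write QAQ in block form as [[Â, f],[f^T, ξ]] where Â is (n-1)×(n-1). Then VAV = Q · [[Â, 0],[0, 0]] · Q. -/

import Mathlib

open Matrix

private def hhE (n : ℕ) : Matrix (Fin (n+1)) (Fin (n+1)) ℝ :=
  Matrix.diagonal (fun i => if i = Fin.last n then (1:ℝ) else 0)

private def hhP (n : ℕ) : Matrix (Fin (n+1)) (Fin (n+1)) ℝ :=
  Matrix.diagonal (fun i => if i = Fin.last n then (0:ℝ) else 1)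

private lemma hhPE (n : ℕ) : hhP n = 1 - hhE n := by
  ext i j
  by_cases hij : i = j
  · subst hij
    by_cases h : i = Fin.last n <;>
      simp [hhP, hhE, Matrix.sub_apply, Matrix.diagonal_apply_eq, Matrix.one_apply, h]
  · simp [hhP, hhE, Matrix.sub_apply, Matrix.diagonal_apply_ne _ hij, Matrix.one_apply, hij]

theorem center_eq_householder_block (n : ℕ) (A : Matrix (Fin (n + 1)) (Fin (n + 1)) ℝ)
    (hA : A.IsSymm) :
    let v : Fin (n + 1) → ℝ := fun i => if i = Fin.last n then 1 + Real.sqrt (n + 1) else 1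
    let Q : Matrix (Fin (n + 1)) (Fin (n + 1)) ℝ := 1 - (2 / (v ⬝ᵥ v)) • vecMulVec v v
    let J : Matrix (Fin (n + 1)) (Fin (n + 1)) ℝ := Matrix.of fun _ _ => (1 : ℝ)
    let V : Matrix (Fin (n + 1)) (Fin (n + 1)) ℝ := 1 - ((n : ℝ) + 1)⁻¹ • J
    let B : Matrix (Fin (n + 1)) (Fin (n + 1)) ℝ :=
      Matrix.of fun i j =>
        if i = Fin.last n ∨ j = Fin.last n then 0 else (Q * A * Q) i j
    V * A * V = Q * B * Q := by
  intro v Q J V B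
  set s : ℝ := Real.sqrt (n + 1) with hs_def
  have hs2 : s ^ 2 = (n : ℝ) + 1 := Real.sq_sqrt (by positivity)
  have hsnn : (0 : ℝ) ≤ s := Real.sqrt_nonneg _
  have hs1 : (1 : ℝ) ≤ s := by
    nlinarith [hs2, hsnn, Nat.cast_nonneg (α := ℝ) n]
  have hs0 : (0 : ℝ) < s := by linarith
  have hvlast : v (Fin.last n) = 1 + s := by simp [v, hs_def]
  have hvother : ∀ i : Fin (n+1), i ≠ Fin.last n → v i = 1 := by
    intro i hi; simp [v, hi]
  have hvv : v ⬝ᵥ v = 2 * s * (s + 1) := by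
    simp only [dotProduct]
    rw [Fin.sum_univ_castSucc]
    have h1 : ∀ i : Fin n, v i.castSucc = 1 := fun i =>
      hvother _ (Fin.castSucc_lt_last i).ne
    simp only [h1, hvlast, one_mul]
    simp only [Finset.sum_const, Finset.card_univ, Fintype.card_fin, nsmul_eq_mul, mul_one]
    nlinarith [hs2]
  have hvv0 : v ⬝ᵥ v ≠ 0 := by rw [hvv]; positivity
  have hQ : ∀ i j, Q i j = (if i = j then (1:ℝ) else 0) - (2 / (v ⬝ᵥ v)) * (v i * v j) := by
    intro i j
    simp [Q, Matrix.sub_apply, Matrix.one_apply, Matrix.smul_apply, vecMulVec_apply]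
  have hQlast : ∀ i, Q i (Fin.last n) = -s⁻¹ := by
    intro i
    rw [hQ, hvlast, hvv]
    by_cases h : i = Fin.last n
    · subst h
      rw [hvlast]
      simp only [if_pos rfl, eq_self_iff_true, if_true]
      field_simp
      ring
    · rw [hvother i h, if_neg h]
      field_simp
      ring
  have hQlast' : ∀ j, Q (Fin.last n) j = -s⁻¹ := by
    intro j
    rw [hQ, hvlast, hvv]
    by_cases h : j = Fin.last n
    · subst h
      rw [hvlast]
      simp only [if_pos rfl, eq_self_iff_true, if_true]
      field_simp
      ring
    · rw [hvother j h, if_neg (Ne.symm h)]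
      field_simp
      ring
  -- Q is an involution
  have hM : (vecMulVec v v) * (vecMulVec v v) = (v ⬝ᵥ v) • vecMulVec v v := by
    ext i j
    simp only [Matrix.mul_apply, vecMulVec_apply, Matrix.smul_apply, smul_eq_mul, dotProduct]
    rw [Finset.sum_mul]
    exact Finset.sum_congr rfl fun k _ => by ring
  have hQQ : Q * Q = 1 := by
    show (1 - (2 / (v ⬝ᵥ v)) • vecMulVec v v) * (1 - (2 / (v ⬝ᵥ v)) • vecMulVec v v) = 1
    simp only [Matrix.sub_mul, Matrix.mul_sub, Matrix.one_mul, Matrix.mul_one,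
      mul_smul_comm, smul_mul_assoc, smul_smul]
    rw [hM, smul_smul, smul_sub, smul_smul]
    have hcoef : 2 / (v ⬝ᵥ v) * (2 / (v ⬝ᵥ v) * (v ⬝ᵥ v)) = 2 / (v ⬝ᵥ v) + 2 / (v ⬝ᵥ v) := by
      field_simp
      ring
    rw [hcoef, add_smul]
    abel
  have hJ : ∀ i j, J i j = 1 := fun _ _ => rfl
  have hVdef : V = 1 - ((n : ℝ) + 1)⁻¹ • J := rfl
  have hBdef : B = Matrix.of fun i j =>
      if i = Fin.last n ∨ j = Fin.last n then 0 else (Q * A * Q) i j := rfl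
  clear_value B V J Q v
  have hQEQ : Q * hhE n * Q = ((n:ℝ)+1)⁻¹ • J := by
    ext i j
    rw [Matrix.mul_assoc, Matrix.mul_apply]
    have hterm : ∀ k, Q i k * (hhE n * Q) k j =
        if k = Fin.last n then Q i (Fin.last n) * Q (Fin.last n) j else 0 := by
      intro k
      rw [hhE, Matrix.diagonal_mul]
      by_cases h : k = Fin.last n
      · subst h; simp
      · simp [h]
    rw [Finset.sum_congr rfl fun k _ => hterm k, Finset.sum_ite_eq' Finset.univ]
    simp only [Finset.mem_univ, if_pos, hQlast, hQlast', Matrix.smul_apply, smul_eq_mul]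
    rw [hJ, mul_one, ← hs2, neg_mul_neg, ← mul_inv, ← sq]
  have hV : Q * hhP n * Q = V := by
    rw [hhPE, Matrix.mul_sub, Matrix.mul_one, Matrix.sub_mul, hQQ, hQEQ, hVdef]
  have hB : B = hhP n * (Q * A * Q) * hhP n := by
    ext i j
    rw [hBdef]
    show (if i = Fin.last n ∨ j = Fin.last n then 0 else (Q * A * Q) i j) = _
    rw [hhP, Matrix.mul_diagonal, Matrix.diagonal_mul]
    by_cases hi : i = Fin.last n
    · simp [hi]
    · by_cases hj : j = Fin.last n
      · simp [hi, hj]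
      · simp [hi, hj]
  calc V * A * V = (Q * hhP n * Q) * A * (Q * hhP n * Q) := by rw [hV]
    _ = Q * (hhP n * (Q * A * Q) * hhP n) * Q := by simp only [Matrix.mul_assoc]
    _ = Q * B * Q := by rw [hB]
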